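/- Let N' < 0 and let X be a complete separable metric space. If μ_n, ν_n, μ, ν are Borel probability measures on X with μ_n → μ and ν_n → ν weakly, then S_{N',μ}(ν) ≤ liminf_{n→∞} S_{N',μ_n}(ν_n), where the entropies take values in [1,∞]. In other words, the Rényi entropy S_{N',·}(·) : P(X) × P(X) → [1,∞] is jointly lower semicontinuous with respect to the weak convergence topology. -/

import Mathlib

/-- A bundled mm-space: a complete separable metric space with a Borel probability measure. -/
structure MMSpace where
  X : Type
  [metric : MetricSpace X]
  [cpl : CompleteSpace X]
  [sep : TopologicalSpace.SeparableSpace X]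
  [mble : MeasurableSpace X]
  [borel : BorelSpace X]
  μ : MeasureTheory.Measure X
  [prob : MeasureTheory.IsProbabilityMeasure μ]

attribute [instance] MMSpace.metric MMSpace.cpl MMSpace.sep MMSpace.mble MMSpace.borel MMSpace.prob

open MeasureTheory ENNReal Filter Topology Set

noncomputable section

/-- A coupling of two measures on `X` is a measure on `X × X` whose marginals are the
given measures. -/
def IsCoupling {X : Type*} [MeasurableSpace X] (π : Measure (X × X)) (μ ν : Measure X) : Prop :=
  π.map Prod.fst = μ ∧ π.map Prod.snd = ν

/-- A measure has finite second moment if `∫ d(x,x₀)² dμ < ∞` for some base point. -/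
def HasFiniteSecondMoment {X : Type*} [PseudoMetricSpace X] [MeasurableSpace X]
    (μ : Measure X) : Prop :=
  ∃ x₀ : X, ∫⁻ x, ENNReal.ofReal (dist x x₀) ^ 2 ∂μ < ∞

/-- The square-root of the quadratic transport cost of a coupling. -/
def cost2 {X : Type*} [PseudoMetricSpace X] [MeasurableSpace X] (π : Measure (X × X)) : ℝ≥0∞ :=
  (∫⁻ p, ENNReal.ofReal (dist p.1 p.2) ^ 2 ∂π) ^ (1 / 2 : ℝ)

/-- The 2-Wasserstein distance (valued in `[0,∞]`). -/
def W2 {X : Type*} [PseudoMetricSpace X] [MeasurableSpace X] (μ ν : Measure X) : ℝ≥0∞ :=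
  ⨅ (π : Measure (X × X)) (_ : IsCoupling π μ ν), cost2 π

/-- A coupling is optimal if it attains the 2-Wasserstein distance. -/
def IsOptimalCoupling {X : Type*} [PseudoMetricSpace X] [MeasurableSpace X]
    (π : Measure (X × X)) (μ ν : Measure X) : Prop :=
  IsCoupling π μ ν ∧ cost2 π = W2 μ ν

open Classical in
/-- The Rényi entropy `S_{N',μ}(ν) = ∫ ρ^{1-1/N'} dμ` if `ν = ρμ ≪ μ`, and `∞` otherwise. -/
def renyiEntropy {X : Type*} [MeasurableSpace X] (N' : ℝ) (μ ν : Measure X) : ℝ≥0∞ :=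
  if ν ≪ μ then ∫⁻ x, (ν.rnDeriv μ x) ^ (1 - 1 / N') ∂μ else ∞

/-- Weak convergence of a sequence of measures: convergence of integrals of all bounded
continuous functions. -/
def WeakConv {X : Type*} [TopologicalSpace X] [MeasurableSpace X]
    (μs : ℕ → Measure X) (μ : Measure X) : Prop :=
  ∀ f : BoundedContinuousFunction X ℝ,
    Tendsto (fun n => ∫ x, f x ∂(μs n)) atTop (𝓝 (∫ x, f x ∂μ))

/-- Tightness of a sequence of measures. -/
def IsTightSeq {X : Type*} [TopologicalSpace X] [MeasurableSpace X]
    (μs : ℕ → Measure X) : Prop :=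
  ∀ ε : ℝ, 0 < ε → ∃ K : Set X, IsCompact K ∧ ∀ n, μs n Kᶜ < ENNReal.ofReal ε

/-- The function `s_κ`, with the convention `s_κ(0) = 1`. -/
def sKappa (κ θ : ℝ) : ℝ :=
  if θ = 0 then 1
  else if 0 < κ then Real.sin (Real.sqrt κ * θ) / (Real.sqrt κ * θ)
  else if κ < 0 then Real.sinh (Real.sqrt (-κ) * θ) / (Real.sqrt (-κ) * θ)
  else 1

/-- `ω_κ = π/√κ` for `κ > 0` and `∞` otherwise. -/
def omegaKappa (κ : ℝ) : ℝ≥0∞ :=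
  if 0 < κ then ENNReal.ofReal (Real.pi / Real.sqrt κ) else ∞

/-- The coefficient `τ_{K,N}^{(t)}(θ)`, valued in `[0,∞]`. -/
def tauCoeff (K N t θ : ℝ) : ℝ≥0∞ :=
  if ENNReal.ofReal θ < omegaKappa (K / (N - 1)) then
    ENNReal.ofReal (t * (sKappa (K / (N - 1)) (t * θ) / sKappa (K / (N - 1)) θ) ^ (1 - 1 / N))
  else ∞

/-- The coefficient `σ_κ^{(t)}(θ)`, valued in `[0,∞]`. -/
def sigmaCoeff (κ t θ : ℝ) : ℝ≥0∞ :=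
  if ENNReal.ofReal θ < omegaKappa κ then
    ENNReal.ofReal (t * sKappa κ (t * θ) / sKappa κ θ)
  else ∞

/-- The curvature-dimension condition `CD(K,N)` for `N < 0`, for a (probability) measure on a
metric space. -/
def IsCDSpace {X : Type*} [MetricSpace X] [MeasurableSpace X] (K N : ℝ) (μX : Measure X) : Prop :=
  ∀ ν₀ ν₁ : Measure X, IsProbabilityMeasure ν₀ → IsProbabilityMeasure ν₁ →
    ν₀ ≪ μX → ν₁ ≪ μX →
    HasFiniteSecondMoment ν₀ → HasFiniteSecondMoment ν₁ →
    renyiEntropy N μX ν₀ < ∞ → renyiEntropy N μX ν₁ < ∞ →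
    ∃ (νt : ℝ → Measure X) (π : Measure (X × X)),
      νt 0 = ν₀ ∧ νt 1 = ν₁ ∧
      (∀ s ∈ Icc (0:ℝ) 1, ∀ t ∈ Icc (0:ℝ) 1,
        W2 (νt s) (νt t) = ENNReal.ofReal |s - t| * W2 ν₀ ν₁) ∧
      IsOptimalCoupling π ν₀ ν₁ ∧
      (∀ t ∈ Icc (0:ℝ) 1, ∀ N' ∈ Ico N (0:ℝ),
        renyiEntropy N' μX ν₀ < ∞ → renyiEntropy N' μX ν₁ < ∞ →
        renyiEntropy N' μX (νt t) ≤
          (∫⁻ p, tauCoeff K N' (1 - t) (dist p.1 p.2) * (ν₀.rnDeriv μX p.1) ^ (-(1 / N')) ∂π)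
          + ∫⁻ p, tauCoeff K N' t (dist p.1 p.2) * (ν₁.rnDeriv μX p.2) ^ (-(1 / N')) ∂π)

/-- The reduced curvature-dimension condition `CD*(K,N)` for `N < 0`. -/
def IsCDStarSpace {X : Type*} [MetricSpace X] [MeasurableSpace X] (K N : ℝ)
    (μX : Measure X) : Prop :=
  ∀ ν₀ ν₁ : Measure X, IsProbabilityMeasure ν₀ → IsProbabilityMeasure ν₁ →
    ν₀ ≪ μX → ν₁ ≪ μX →
    HasFiniteSecondMoment ν₀ → HasFiniteSecondMoment ν₁ →
    renyiEntropy N μX ν₀ < ∞ → renyiEntropy N μX ν₁ < ∞ →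
    ∃ (νt : ℝ → Measure X) (π : Measure (X × X)),
      νt 0 = ν₀ ∧ νt 1 = ν₁ ∧
      (∀ s ∈ Icc (0:ℝ) 1, ∀ t ∈ Icc (0:ℝ) 1,
        W2 (νt s) (νt t) = ENNReal.ofReal |s - t| * W2 ν₀ ν₁) ∧
      IsOptimalCoupling π ν₀ ν₁ ∧
      (∀ t ∈ Icc (0:ℝ) 1, ∀ N' ∈ Ico N (0:ℝ),
        renyiEntropy N' μX ν₀ < ∞ → renyiEntropy N' μX ν₁ < ∞ →
        renyiEntropy N' μX (νt t) ≤
          (∫⁻ p, sigmaCoeff (K / N') (1 - t) (dist p.1 p.2)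
              * (ν₀.rnDeriv μX p.1) ^ (-(1 / N')) ∂π)
          + ∫⁻ p, sigmaCoeff (K / N') t (dist p.1 p.2)
              * (ν₁.rnDeriv μX p.2) ^ (-(1 / N')) ∂π)

/-- The conditioned (normalized restricted) measure `ν_B`. -/
def condProb {X : Type*} [MeasurableSpace X] (ν : Measure X) (B : Set X) : Measure X :=
  (ν B)⁻¹ • ν.restrict B

/-- Inverse hyperbolic cosine, `arcosh x = log (x + √(x²-1))`. -/
def acosh (x : ℝ) : ℝ := Real.log (x + Real.sqrt (x ^ 2 - 1))

/-- A parameter of an mm-space: a Borel map `[0,1) → X` pushing the Lebesgue measure to `μ`. -/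
def IsParameter (A : MMSpace) (φ : ℝ → A.X) : Prop :=
  Measurable φ ∧ Measure.map φ (volume.restrict (Ico (0:ℝ) 1)) = A.μ

/-- The Ky Fan distance between two measurable functions on `[0,1)`. -/
def kyFan (f g : ℝ → ℝ) : ℝ :=
  sInf {ε : ℝ | 0 ≤ ε ∧
    (volume.restrict (Ico (0:ℝ) 1)) {x | ε < |f x - g x|} ≤ ENNReal.ofReal ε}

/-- The pullback of the 1-Lipschitz functions on an mm-space by a parameter. -/
def pullLip (A : MMSpace) (φ : ℝ → A.X) : Set (ℝ → ℝ) :=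
  {h | ∃ f : A.X → ℝ, LipschitzWith 1 f ∧ h = f ∘ φ}

/-- The Hausdorff distance between two sets of functions with respect to the Ky Fan metric. -/
def hausdorffKF (A B : Set (ℝ → ℝ)) : ℝ :=
  max (⨆ f ∈ A, ⨅ g ∈ B, kyFan f g) (⨆ g ∈ B, ⨅ f ∈ A, kyFan f g)

/-- The observable distance between two mm-spaces. -/
def dconc (A B : MMSpace) : ℝ :=
  sInf {r : ℝ | ∃ φ ψ, IsParameter A φ ∧ IsParameter B ψ ∧
    r = hausdorffKF (pullLip A φ) (pullLip B ψ)}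

end

noncomputable section

/-- The smooth approximation `F_a(x) = a⁻¹ log(e^{ax} + e^{-ax})` of `|x|`. -/
def Fa (a x : ℝ) : ℝ := a⁻¹ * Real.log (Real.exp (a * x) + Real.exp (-(a * x)))

/-- A (minimizing, constant-speed) geodesic parametrized by `[0,1]`. -/
def IsGeodOn01 {X : Type*} [PseudoMetricSpace X] (γ : ℝ → X) : Prop :=
  ∀ s ∈ Set.Icc (0:ℝ) 1, ∀ s' ∈ Set.Icc (0:ℝ) 1,
    dist (γ s) (γ s') = |s - s'| * dist (γ 0) (γ 1)

end


section RenyiAux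

open MeasureTheory Filter Set Topology ENNReal

/-- Young's inequality step: for any probability measures and nonneg measurable `g`. -/
lemma RE_young {Y : Type*} [MeasurableSpace Y] {N' a b : ℝ}
    (ha : a = 1 - 1 / N') (hconj : a.HolderConjugate b)
    (μ' ν' : Measure Y) [SigmaFinite μ'] [SigmaFinite ν']
    {g : Y → ℝ≥0∞} (hg : Measurable g) :
    ENNReal.ofReal a * ∫⁻ x, g x ∂ν' ≤
      renyiEntropy N' μ' ν' + ENNReal.ofReal (a - 1) * ∫⁻ x, g x ^ b ∂μ' := by
  by_cases hac : ν' ≪ μ'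
  · rw [renyiEntropy, if_pos hac, ← ha]
    have hρ : Measurable (ν'.rnDeriv μ') := Measure.measurable_rnDeriv ν' μ'
    have hρa : Measurable fun x => ν'.rnDeriv μ' x ^ a :=
      ENNReal.continuous_rpow_const.measurable.comp hρ
    have hgb : Measurable fun x => g x ^ b :=
      ENNReal.continuous_rpow_const.measurable.comp hg
    have hquot : a / b = a - 1 := by
      have hb : b = a / (a - 1) := hconj.conjugate_eq
      have h1 : a - 1 ≠ 0 := sub_ne_zero.2 (ne_of_gt hconj.lt)
      rw [hb, div_div_eq_mul_div, mul_comm, mul_div_assoc, div_self hconj.pos.ne', mul_one]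
    have ha0 : ENNReal.ofReal a ≠ 0 := (ENNReal.ofReal_pos.2 hconj.pos).ne'
    calc ENNReal.ofReal a * ∫⁻ x, g x ∂ν'
        = ∫⁻ x, ENNReal.ofReal a * (ν'.rnDeriv μ' x * g x) ∂μ' := by
          rw [← lintegral_rnDeriv_mul hac hg.aemeasurable,
            lintegral_const_mul _ (f := fun x => ν'.rnDeriv μ' x * g x) (hρ.mul hg)]
      _ ≤ ∫⁻ x, (ν'.rnDeriv μ' x ^ a + ENNReal.ofReal (a - 1) * g x ^ b) ∂μ' := by
          refine lintegral_mono fun x => ?_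
          have hy := ENNReal.young_inequality (ν'.rnDeriv μ' x) (g x) hconj
          calc ENNReal.ofReal a * (ν'.rnDeriv μ' x * g x)
              ≤ ENNReal.ofReal a *
                  (ν'.rnDeriv μ' x ^ a / ENNReal.ofReal a + g x ^ b / ENNReal.ofReal b) :=
                mul_le_mul_right hy _
            _ = ν'.rnDeriv μ' x ^ a + ENNReal.ofReal (a - 1) * g x ^ b := by
                rw [mul_add, ENNReal.mul_div_cancel ha0 ENNReal.ofReal_ne_top]
                congr 1
                rw [div_eq_mul_inv, ← mul_assoc, mul_comm (ENNReal.ofReal a) (g x ^ b),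
                  mul_assoc, ← div_eq_mul_inv, ← ENNReal.ofReal_div_of_pos hconj.symm.pos,
                  hquot, mul_comm]
      _ = _ := by
          rw [lintegral_add_left hρa, lintegral_const_mul _ hgb]
  · rw [renyiEntropy, if_neg hac]
    simp

/-- If `aₙ → A`, `bₙ → B` with `B` finite and `aₙ ≤ sₙ + bₙ`, then `A ≤ liminf sₙ + B`. -/
lemma RE_liminf_aux {a b s : ℕ → ℝ≥0∞} {A B : ℝ≥0∞}
    (hA : Tendsto a atTop (𝓝 A)) (hB : Tendsto b atTop (𝓝 B)) (hBt : B ≠ ∞)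
    (hle : ∀ n, a n ≤ s n + b n) : A ≤ liminf s atTop + B := by
  set l := liminf s atTop with hl
  rcases eq_or_ne l ∞ with h | h
  · rw [h]; simp
  refine le_of_forall_lt fun A' hA' => ?_
  obtain ⟨A'', hA'1, hA'2⟩ := exists_between hA'
  have key : A'' ≤ l + B := by
    refine ENNReal.le_of_forall_pos_le_add fun ε hε _ => ?_
    have h1 : ∀ᶠ n in atTop, A'' < a n := hA.eventually_const_lt hA'2
    have hεh : (ε : ℝ≥0∞) / 2 ≠ 0 :=
      (ENNReal.half_pos (ENNReal.coe_ne_zero.2 hε.ne')).ne'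
    have h2 : ∀ᶠ n in atTop, b n < B + (ε : ℝ≥0∞) / 2 :=
      hB.eventually_lt_const (ENNReal.lt_add_right hBt hεh)
    have h3 : ∃ᶠ n in atTop, s n < l + (ε : ℝ≥0∞) / 2 :=
      frequently_lt_of_liminf_lt (by isBoundedDefault) (ENNReal.lt_add_right h hεh)
    obtain ⟨n, ⟨hn1, hn2⟩, hn3⟩ := ((h1.and h2).and_frequently h3).exists
    have : A'' < (l + (ε : ℝ≥0∞) / 2) + (B + (ε : ℝ≥0∞) / 2) :=
      lt_of_lt_of_le hn1 ((hle n).trans (add_le_add hn3.le hn2.le))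
    calc A'' ≤ (l + (ε : ℝ≥0∞) / 2) + (B + (ε : ℝ≥0∞) / 2) := this.le
      _ = l + B + ((ε : ℝ≥0∞) / 2 + (ε : ℝ≥0∞) / 2) := by ring
      _ = l + B + ε := by rw [ENNReal.add_halves]
  exact lt_of_lt_of_le hA'1 key

/-- Clamping to `[0, C]` does not increase the distance to points of `[0, C]`. -/
lemma RE_clamp {u v C : ℝ} (h0 : 0 ≤ u) (hC : u ≤ C) :
    |u - max 0 (min v C)| ≤ |u - v| := by
  have h1 : u - v ≤ |u - v| := le_abs_self _
  have h2 : v - u ≤ |u - v| := by rw [abs_sub_comm]; exact le_abs_self _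
  have h3 : (0:ℝ) ≤ |u - v| := abs_nonneg _
  rw [abs_sub_le_iff]
  simp only [min_def, max_def]
  split_ifs <;> constructor <;> linarith

/-- A Lipschitz bound for `x ↦ x ^ b` on `[0, C]`. -/
lemma RE_rpow_lip {b C : ℝ} (hb : 1 < b) {u v : ℝ}
    (hu : u ∈ Icc (0:ℝ) C) (hv : v ∈ Icc (0:ℝ) C) :
    |u ^ b - v ^ b| ≤ b * C ^ (b - 1) * |u - v| := by
  have hb1 : (0:ℝ) ≤ b - 1 := by linarith
  have hbd : ∀ x ∈ Icc (0:ℝ) C, ‖b * x ^ (b - 1)‖ ≤ b * C ^ (b - 1) := by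
    intro x hx
    rw [Real.norm_eq_abs, abs_of_nonneg (mul_nonneg (by linarith) (Real.rpow_nonneg hx.1 _))]
    exact mul_le_mul_of_nonneg_left (Real.rpow_le_rpow hx.1 hx.2 hb1) (by linarith)
  have hmvt := Convex.norm_image_sub_le_of_norm_hasDerivWithin_le
    (C := b * C ^ (b - 1)) (f := fun x : ℝ => x ^ b) (f' := fun x : ℝ => b * x ^ (b - 1))
    (s := Icc 0 C)
    (fun x _ => (Real.hasDerivAt_rpow_const (Or.inr hb.le)).hasDerivWithinAt)
    hbd (convex_Icc 0 C) hv hu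
  simpa [Real.norm_eq_abs] using hmvt

end RenyiAux


section RenyiAux2

open MeasureTheory Filter Set Topology ENNReal

/-- The liminf bound for nonnegative bounded continuous test functions. -/
lemma RE_bcf {X : Type*} [TopologicalSpace X] [MeasurableSpace X] [OpensMeasurableSpace X]
    {N' a b : ℝ} (ha : a = 1 - 1 / N') (hconj : a.HolderConjugate b)
    {μs νs : ℕ → Measure X} {μ ν : Measure X}
    (hμs : ∀ n, IsProbabilityMeasure (μs n)) (hνs : ∀ n, IsProbabilityMeasure (νs n))
    [IsProbabilityMeasure μ] [IsProbabilityMeasure ν]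
    (hμw : WeakConv μs μ) (hνw : WeakConv νs ν)
    (h : BoundedContinuousFunction X ℝ) (hpos : ∀ x, 0 ≤ h x) :
    ENNReal.ofReal a * ∫⁻ x, ENNReal.ofReal (h x) ∂ν ≤
      liminf (fun n => renyiEntropy N' (μs n) (νs n)) atTop
        + ENNReal.ofReal (a - 1) * ∫⁻ x, ENNReal.ofReal (h x) ^ b ∂μ := by
  have hb1 : (0:ℝ) < b := hconj.symm.pos
  -- the test function `h ^ b` as a bounded continuous function
  set hb : BoundedContinuousFunction X ℝ := BoundedContinuousFunction.ofNormedAddCommGroup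
    (fun x => h x ^ b) (h.continuous.rpow_const fun x => Or.inr hb1.le) (‖h‖ ^ b)
    (fun x => by
      rw [Real.norm_eq_abs, abs_of_nonneg (Real.rpow_nonneg (hpos x) _)]
      exact Real.rpow_le_rpow (hpos x) ((le_abs_self _).trans (h.norm_coe_le_norm x)) hb1.le)
    with hbdef
  have hbcoe : ∀ x, hb x = h x ^ b := fun x => rfl
  have hbpos : ∀ x, 0 ≤ hb x := fun x => Real.rpow_nonneg (hpos x) _
  -- identify lintegrals with integrals
  have key1 : ∀ (m : Measure X), IsProbabilityMeasure m →
      ∫⁻ x, ENNReal.ofReal (h x) ∂m = ENNReal.ofReal (∫ x, h x ∂m) := by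
    intro m hm
    haveI := hm
    rw [ofReal_integral_eq_lintegral_ofReal (h.integrable m) (ae_of_all _ hpos)]
  have key2 : ∀ (m : Measure X), IsProbabilityMeasure m →
      ∫⁻ x, ENNReal.ofReal (h x) ^ b ∂m = ENNReal.ofReal (∫ x, hb x ∂m) := by
    intro m hm
    haveI := hm
    rw [ofReal_integral_eq_lintegral_ofReal (hb.integrable m) (ae_of_all _ hbpos)]
    refine lintegral_congr fun x => ?_
    rw [hbcoe, ← ENNReal.ofReal_rpow_of_nonneg (hpos x) hb1.le]
  -- convergence
  have hA : Tendsto (fun n => ENNReal.ofReal a * ∫⁻ x, ENNReal.ofReal (h x) ∂(νs n)) atTop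
      (𝓝 (ENNReal.ofReal a * ∫⁻ x, ENNReal.ofReal (h x) ∂ν)) := by
    have := fun n => key1 (νs n) (hνs n)
    simp_rw [this, key1 ν inferInstance]
    exact ENNReal.Tendsto.const_mul
      ((ENNReal.continuous_ofReal.tendsto _).comp (hνw h)) (Or.inr ENNReal.ofReal_ne_top)
  have hB : Tendsto (fun n => ENNReal.ofReal (a - 1) * ∫⁻ x, ENNReal.ofReal (h x) ^ b ∂(μs n))
      atTop (𝓝 (ENNReal.ofReal (a - 1) * ∫⁻ x, ENNReal.ofReal (h x) ^ b ∂μ)) := by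
    have := fun n => key2 (μs n) (hμs n)
    simp_rw [this, key2 μ inferInstance]
    exact ENNReal.Tendsto.const_mul
      ((ENNReal.continuous_ofReal.tendsto _).comp (hμw hb)) (Or.inr ENNReal.ofReal_ne_top)
  have hBt : ENNReal.ofReal (a - 1) * ∫⁻ x, ENNReal.ofReal (h x) ^ b ∂μ ≠ ∞ := by
    rw [key2 μ inferInstance]
    exact ENNReal.mul_ne_top ENNReal.ofReal_ne_top ENNReal.ofReal_ne_top
  refine RE_liminf_aux hA hB hBt fun n => ?_
  haveI := hμs n; haveI := hνs n
  exact RE_young ha hconj (μs n) (νs n) (h.continuous.measurable.ennreal_ofReal)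

/-- Extension of the liminf bound to bounded measurable test functions. -/
lemma RE_meas {X : Type*} [MetricSpace X] [MeasurableSpace X] [BorelSpace X]
    {a b : ℝ} (hconj : a.HolderConjugate b)
    {μ ν : Measure X} [IsProbabilityMeasure μ] [IsProbabilityMeasure ν] {L : ℝ≥0∞}
    (Hbcf : ∀ h : BoundedContinuousFunction X ℝ, (∀ x, 0 ≤ h x) →
      ENNReal.ofReal a * ∫⁻ x, ENNReal.ofReal (h x) ∂ν ≤
        L + ENNReal.ofReal (a - 1) * ∫⁻ x, ENNReal.ofReal (h x) ^ b ∂μ)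
    {g : X → ℝ≥0∞} (hg : Measurable g) {C : ℝ} (hC : 0 ≤ C)
    (hgC : ∀ x, g x ≤ ENNReal.ofReal C) :
    ENNReal.ofReal a * ∫⁻ x, g x ∂ν ≤ L + ENNReal.ofReal (a - 1) * ∫⁻ x, g x ^ b ∂μ := by
  have hb1 : (1:ℝ) < b := hconj.symm.lt
  have ha1 : (1:ℝ) < a := hconj.lt
  set f : X → ℝ := fun x => (g x).toReal with hfdef
  have hfm : Measurable f := hg.ennreal_toReal
  have hgne : ∀ x, g x ≠ ∞ := fun x => ((hgC x).trans_lt ENNReal.ofReal_lt_top).ne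
  have hfg : ∀ x, ENNReal.ofReal (f x) = g x := fun x => ENNReal.ofReal_toReal (hgne x)
  have hf0 : ∀ x, 0 ≤ f x := fun x => ENNReal.toReal_nonneg
  have hfC : ∀ x, f x ≤ C := fun x => ENNReal.toReal_le_of_le_ofReal hC (hgC x)
  have hgb : Measurable fun x => g x ^ b := ENNReal.continuous_rpow_const.measurable.comp hg
  set K : ℝ := b * C ^ (b - 1) with hKdef
  have hK0 : 0 ≤ K := mul_nonneg (by linarith) (Real.rpow_nonneg hC _)
  refine ENNReal.le_of_forall_pos_le_add fun ε hε _ => ?_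
  set D : ℝ≥0∞ := ENNReal.ofReal a + ENNReal.ofReal (a - 1) * ENNReal.ofReal K + 1 with hDdef
  have hD0 : D ≠ 0 := by simp [hDdef]
  have hDt : D ≠ ∞ := by
    refine ENNReal.add_ne_top.2 ⟨ENNReal.add_ne_top.2 ⟨ENNReal.ofReal_ne_top, ?_⟩, one_ne_top⟩
    exact ENNReal.mul_ne_top ENNReal.ofReal_ne_top ENNReal.ofReal_ne_top
  set δ : ℝ≥0∞ := (ε : ℝ≥0∞) / D with hδdef
  have hδ0 : δ ≠ 0 := (ENNReal.div_pos (ENNReal.coe_ne_zero.2 hε.ne') hDt).ne'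
  -- approximate `f` in `L¹(μ + ν)` by a bounded continuous function
  have hInt : Integrable f (μ + ν) := by
    refine ⟨hfm.aestronglyMeasurable, HasFiniteIntegral.of_bounded (C := C) ?_⟩
    exact ae_of_all _ fun x => by
      rw [Real.norm_eq_abs, abs_of_nonneg (hf0 x)]; exact hfC x
  obtain ⟨h, hh, -⟩ := hInt.exists_boundedContinuous_lintegral_sub_le hδ0
  -- clamp it to `[0, C]`
  set h' : BoundedContinuousFunction X ℝ := BoundedContinuousFunction.ofNormedAddCommGroup
    (fun x => max 0 (min (h x) C)) (continuous_const.max (h.continuous.min continuous_const)) C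
    (fun x => by
      rw [Real.norm_eq_abs, abs_of_nonneg (le_max_left _ _)]
      exact max_le hC (min_le_right _ _)) with hh'def
  have hh'coe : ∀ x, h' x = max 0 (min (h x) C) := fun x => rfl
  have hh'0 : ∀ x, 0 ≤ h' x := fun x => le_max_left _ _
  have hh'C : ∀ x, h' x ≤ C := fun x => max_le hC (min_le_right _ _)
  have hh'm : Measurable fun x => h' x := h'.continuous.measurable
  have hdiff : ∀ x, |f x - h' x| ≤ |f x - h x| := fun x => RE_clamp (hf0 x) (hfC x)
  -- the error integrals
  have hE : ∀ (m : Measure X), m ≤ μ + ν →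
      ∫⁻ x, ENNReal.ofReal |f x - h' x| ∂m ≤ δ := by
    intro m hm
    calc ∫⁻ x, ENNReal.ofReal |f x - h' x| ∂m
        ≤ ∫⁻ x, ENNReal.ofReal |f x - h x| ∂m :=
          lintegral_mono fun x => ENNReal.ofReal_le_ofReal (hdiff x)
      _ ≤ ∫⁻ x, ENNReal.ofReal |f x - h x| ∂(μ + ν) := lintegral_mono' hm le_rfl
      _ = ∫⁻ x, (‖f x - h x‖₊ : ℝ≥0∞) ∂(μ + ν) := by
          refine lintegral_congr fun x => ?_
          exact (Real.enorm_eq_ofReal_abs ..).symm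
      _ ≤ δ := hh
  -- step 1 : `∫⁻ g ∂ν ≤ ∫⁻ h' ∂ν + δ`
  have step1 : ∫⁻ x, g x ∂ν ≤ ∫⁻ x, ENNReal.ofReal (h' x) ∂ν + δ := by
    have : ∀ x, g x ≤ ENNReal.ofReal (h' x) + ENNReal.ofReal |f x - h' x| := by
      intro x
      rw [← hfg x, ← ENNReal.ofReal_add (hh'0 x) (abs_nonneg _)]
      exact ENNReal.ofReal_le_ofReal (by
        have := le_abs_self (f x - h' x); linarith)
    calc ∫⁻ x, g x ∂ν ≤ ∫⁻ x, (ENNReal.ofReal (h' x) + ENNReal.ofReal |f x - h' x|) ∂ν :=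
          lintegral_mono this
      _ = ∫⁻ x, ENNReal.ofReal (h' x) ∂ν + ∫⁻ x, ENNReal.ofReal |f x - h' x| ∂ν :=
          lintegral_add_left hh'm.ennreal_ofReal _
      _ ≤ ∫⁻ x, ENNReal.ofReal (h' x) ∂ν + δ := by
          gcongr
          exact hE ν (Measure.le_add_left le_rfl)
  -- step 2 : `∫⁻ h'^b ∂μ ≤ ∫⁻ g^b ∂μ + K δ`
  have step2 : ∫⁻ x, ENNReal.ofReal (h' x) ^ b ∂μ ≤
      ∫⁻ x, g x ^ b ∂μ + ENNReal.ofReal K * δ := by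
    have hpt : ∀ x, ENNReal.ofReal (h' x) ^ b ≤
        g x ^ b + ENNReal.ofReal K * ENNReal.ofReal |f x - h' x| := by
      intro x
      have hlip : |h' x ^ b - f x ^ b| ≤ K * |h' x - f x| :=
        RE_rpow_lip hb1 ⟨hh'0 x, hh'C x⟩ ⟨hf0 x, hfC x⟩
      have h1 : h' x ^ b ≤ f x ^ b + K * |f x - h' x| := by
        have := le_abs_self (h' x ^ b - f x ^ b)
        rw [abs_sub_comm (h' x) (f x)] at hlip
        linarith
      calc ENNReal.ofReal (h' x) ^ b = ENNReal.ofReal (h' x ^ b) :=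
            ENNReal.ofReal_rpow_of_nonneg (hh'0 x) (by linarith)
        _ ≤ ENNReal.ofReal (f x ^ b + K * |f x - h' x|) := ENNReal.ofReal_le_ofReal h1
        _ ≤ ENNReal.ofReal (f x ^ b) + ENNReal.ofReal (K * |f x - h' x|) :=
            ENNReal.ofReal_add_le
        _ = g x ^ b + ENNReal.ofReal K * ENNReal.ofReal |f x - h' x| := by
            rw [ENNReal.ofReal_mul hK0, ← hfg x,
              ENNReal.ofReal_rpow_of_nonneg (hf0 x) (by linarith)]
    calc ∫⁻ x, ENNReal.ofReal (h' x) ^ b ∂μ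
        ≤ ∫⁻ x, (g x ^ b + ENNReal.ofReal K * ENNReal.ofReal |f x - h' x|) ∂μ :=
          lintegral_mono hpt
      _ = ∫⁻ x, g x ^ b ∂μ + ENNReal.ofReal K * ∫⁻ x, ENNReal.ofReal |f x - h' x| ∂μ := by
          rw [lintegral_add_left hgb,
            lintegral_const_mul _ (f := fun x => ENNReal.ofReal |f x - h' x|) ((hfm.sub hh'm).abs.ennreal_ofReal)]
      _ ≤ ∫⁻ x, g x ^ b ∂μ + ENNReal.ofReal K * δ := by
          gcongr
          exact hE μ (Measure.le_add_right le_rfl)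
  -- combine
  have hmain := Hbcf h' hh'0
  have hdD : (ENNReal.ofReal a + ENNReal.ofReal (a - 1) * ENNReal.ofReal K) * δ ≤ ε := by
    calc (ENNReal.ofReal a + ENNReal.ofReal (a - 1) * ENNReal.ofReal K) * δ
        ≤ D * δ := by
          refine mul_le_mul_left ?_ _
          rw [hDdef]
          exact le_add_of_nonneg_right zero_le_one
      _ = (ε : ℝ≥0∞) := by rw [hδdef, ENNReal.mul_div_cancel hD0 hDt]
  calc ENNReal.ofReal a * ∫⁻ x, g x ∂ν
      ≤ ENNReal.ofReal a * (∫⁻ x, ENNReal.ofReal (h' x) ∂ν + δ) := mul_le_mul_right step1 _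
    _ = ENNReal.ofReal a * ∫⁻ x, ENNReal.ofReal (h' x) ∂ν + ENNReal.ofReal a * δ := by
        rw [mul_add]
    _ ≤ (L + ENNReal.ofReal (a - 1) * ∫⁻ x, ENNReal.ofReal (h' x) ^ b ∂μ)
          + ENNReal.ofReal a * δ := add_le_add_left hmain _
    _ ≤ (L + ENNReal.ofReal (a - 1) * (∫⁻ x, g x ^ b ∂μ + ENNReal.ofReal K * δ))
          + ENNReal.ofReal a * δ := by gcongr
    _ = L + ENNReal.ofReal (a - 1) * ∫⁻ x, g x ^ b ∂μ
          + (ENNReal.ofReal a + ENNReal.ofReal (a - 1) * ENNReal.ofReal K) * δ := by ring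
    _ ≤ L + ENNReal.ofReal (a - 1) * ∫⁻ x, g x ^ b ∂μ + ε := add_le_add_right hdD _

end RenyiAux2

open MeasureTheory Filter Set in
/-- Joint lower semicontinuity of the Rényi entropy (`N' < 0`) with respect to
weak convergence. -/
theorem renyiEntropy_lsc {X : Type*} [MetricSpace X] [CompleteSpace X]
    [TopologicalSpace.SeparableSpace X] [MeasurableSpace X] [BorelSpace X]
    (N' : ℝ) (hN' : N' < 0)
    (μs νs : ℕ → Measure X) (μ ν : Measure X)
    (hμs : ∀ n, IsProbabilityMeasure (μs n)) (hνs : ∀ n, IsProbabilityMeasure (νs n))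
    [IsProbabilityMeasure μ] [IsProbabilityMeasure ν]
    (hμw : WeakConv μs μ) (hνw : WeakConv νs ν) :
    renyiEntropy N' μ ν ≤ liminf (fun n => renyiEntropy N' (μs n) (νs n)) atTop := by
  have h1N : 1 / N' < 0 := one_div_neg.2 hN'
  set a : ℝ := 1 - 1 / N' with hadef
  have ha1 : 1 < a := by rw [hadef]; linarith
  have ha0 : (0:ℝ) < a := by linarith
  set b : ℝ := a / (a - 1) with hbdef
  have hconj : a.HolderConjugate b := (Real.holderConjugate_iff_eq_conjExponent ha1).2 rfl
  have hb1 : (1:ℝ) < b := hconj.symm.lt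
  set L := liminf (fun n => renyiEntropy N' (μs n) (νs n)) atTop with hLdef
  rcases eq_or_ne L ∞ with hL | hL
  · rw [hL]; exact le_top
  have Hbcf : ∀ h : BoundedContinuousFunction X ℝ, (∀ x, 0 ≤ h x) →
      ENNReal.ofReal a * ∫⁻ x, ENNReal.ofReal (h x) ∂ν ≤
        L + ENNReal.ofReal (a - 1) * ∫⁻ x, ENNReal.ofReal (h x) ^ b ∂μ :=
    fun h hp => RE_bcf hadef hconj hμs hνs hμw hνw h hp
  by_cases hac : ν ≪ μ
  · -- absolutely continuous case
    rw [renyiEntropy, if_pos hac, ← hadef]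
    set ρ := ν.rnDeriv μ with hρdef
    have hρm : Measurable ρ := Measure.measurable_rnDeriv ν μ
    have key : ∀ M : ℕ, ∫⁻ x, min (ρ x) (M : ℝ≥0∞) ^ a ∂μ ≤ L := by
      intro M
      have hgMm : Measurable fun x => min (ρ x) (M : ℝ≥0∞) ^ (a - 1) :=
        ENNReal.continuous_rpow_const.measurable.comp (hρm.min measurable_const)
      have hbound : ∀ x, min (ρ x) (M : ℝ≥0∞) ^ (a - 1) ≤
          ENNReal.ofReal ((M : ℝ) ^ (a - 1)) := by
        intro x
        rw [← ENNReal.ofReal_rpow_of_nonneg (Nat.cast_nonneg M) (by linarith),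
          ENNReal.ofReal_natCast]
        exact ENNReal.rpow_le_rpow (min_le_right _ _) (by linarith)
      have hTne : ∫⁻ x, min (ρ x) (M : ℝ≥0∞) ^ a ∂μ ≠ ∞ := by
        refine ne_of_lt (lt_of_le_of_lt (lintegral_mono (g := fun _ => (M:ℝ≥0∞) ^ a)
          fun x => ENNReal.rpow_le_rpow (min_le_right _ _) ha0.le) ?_)
        rw [lintegral_const, measure_univ, mul_one]
        exact ENNReal.rpow_lt_top_of_nonneg ha0.le (ENNReal.natCast_ne_top M)
      have h1 := RE_meas hconj Hbcf hgMm (Real.rpow_nonneg (Nat.cast_nonneg M) _) hbound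
      have hpow : ∀ x, (min (ρ x) (M : ℝ≥0∞) ^ (a - 1)) ^ b = min (ρ x) (M : ℝ≥0∞) ^ a := by
        intro x
        rw [← ENNReal.rpow_mul, hconj.sub_one_mul_conj]
      rw [lintegral_congr hpow] at h1
      have hlow : ∫⁻ x, min (ρ x) (M : ℝ≥0∞) ^ a ∂μ ≤
          ∫⁻ x, min (ρ x) (M : ℝ≥0∞) ^ (a - 1) ∂ν := by
        rw [← MeasureTheory.lintegral_rnDeriv_mul hac hgMm.aemeasurable]
        refine lintegral_mono fun x => ?_
        rcases eq_or_ne (min (ρ x) (M : ℝ≥0∞)) 0 with h0 | h0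
        · rw [h0, ENNReal.zero_rpow_of_pos ha0]; exact zero_le
        · have hne : min (ρ x) (M : ℝ≥0∞) ≠ ∞ :=
            ((min_le_right _ _).trans_lt (ENNReal.natCast_lt_top M)).ne
          calc min (ρ x) (M : ℝ≥0∞) ^ a
              = min (ρ x) (M : ℝ≥0∞) ^ ((1:ℝ) + (a - 1)) := by norm_num
            _ = min (ρ x) (M : ℝ≥0∞) * min (ρ x) (M : ℝ≥0∞) ^ (a - 1) := by
                rw [ENNReal.rpow_add _ _ h0 hne, ENNReal.rpow_one]
            _ ≤ ρ x * min (ρ x) (M : ℝ≥0∞) ^ (a - 1) :=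
                mul_le_mul_left (min_le_left _ _) _
      have h2 : ENNReal.ofReal a * ∫⁻ x, min (ρ x) (M : ℝ≥0∞) ^ a ∂μ ≤
          L + ENNReal.ofReal (a - 1) * ∫⁻ x, min (ρ x) (M : ℝ≥0∞) ^ a ∂μ :=
        le_trans (mul_le_mul_right hlow _) h1
      have hofa : ENNReal.ofReal a = ENNReal.ofReal (a - 1) + 1 := by
        rw [← ENNReal.ofReal_one, ← ENNReal.ofReal_add (by linarith) zero_le_one]
        norm_num
      rw [hofa, add_mul, one_mul, add_comm L] at h2
      exact (ENNReal.add_le_add_iff_left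
        (ENNReal.mul_ne_top ENNReal.ofReal_ne_top hTne)).1 h2
    have hmeas : ∀ M : ℕ, Measurable fun x => min (ρ x) (M : ℝ≥0∞) ^ a := fun M =>
      ENNReal.continuous_rpow_const.measurable.comp (hρm.min measurable_const)
    have hmono : Monotone fun (M : ℕ) (x : X) => min (ρ x) (M : ℝ≥0∞) ^ a := by
      intro M N h x
      exact ENNReal.rpow_le_rpow (min_le_min le_rfl (Nat.cast_le.2 h)) ha0.le
    have hptsup : ∀ x, ⨆ M : ℕ, min (ρ x) (M : ℝ≥0∞) ^ a = ρ x ^ a := by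
      intro x
      rcases eq_or_ne (ρ x) ∞ with h | h
      · have hmin : ∀ M : ℕ, min (ρ x) (M : ℝ≥0∞) = (M : ℝ≥0∞) := fun M =>
          min_eq_right (h ▸ le_top)
        simp_rw [hmin, h, ENNReal.top_rpow_of_pos ha0]
        rw [eq_top_iff, ← ENNReal.iSup_natCast]
        refine iSup_mono fun M => ?_
        cases M with
        | zero => simp
        | succ M =>
            calc ((M+1 : ℕ) : ℝ≥0∞) = ((M+1 : ℕ) : ℝ≥0∞) ^ (1:ℝ) := (ENNReal.rpow_one _).symm
              _ ≤ ((M+1 : ℕ) : ℝ≥0∞) ^ a := ENNReal.rpow_le_rpow_of_exponent_le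
                  (by exact_mod_cast Nat.one_le_iff_ne_zero.2 (Nat.succ_ne_zero M)) ha1.le
      · obtain ⟨n, hn⟩ := ENNReal.exists_nat_gt h
        refine le_antisymm (iSup_le fun M =>
          ENNReal.rpow_le_rpow (min_le_left _ _) ha0.le) ?_
        refine le_iSup_of_le n (le_of_eq ?_)
        rw [min_eq_left hn.le]
    calc ∫⁻ x, ρ x ^ a ∂μ = ∫⁻ x, ⨆ M : ℕ, min (ρ x) (M : ℝ≥0∞) ^ a ∂μ :=
          lintegral_congr fun x => (hptsup x).symm
      _ = ⨆ M : ℕ, ∫⁻ x, min (ρ x) (M : ℝ≥0∞) ^ a ∂μ := lintegral_iSup hmeas hmono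
      _ ≤ L := iSup_le key
  · -- non absolutely continuous case: contradiction with `L ≠ ∞`
    exfalso
    obtain ⟨s, hs0, hsne⟩ : ∃ s : Set X, μ s = 0 ∧ ν s ≠ 0 := by
      by_contra hno
      push_neg at hno
      exact hac (Measure.AbsolutelyContinuous.mk fun s _ h0 => hno s h0)
    set t := toMeasurable μ s with htdef
    have htm : MeasurableSet t := measurableSet_toMeasurable μ s
    have hμt : μ t = 0 := by rw [htdef, measure_toMeasurable]; exact hs0
    have hνt0 : ν t ≠ 0 := fun h =>
      hsne (le_antisymm (h ▸ measure_mono (subset_toMeasurable μ s)) zero_le)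
    have hcne : ν t ≠ ∞ := measure_ne_top ν t
    have hhalf : ν t / 2 < ν t := ENNReal.half_lt_self hνt0 hcne
    obtain ⟨F, hFt, hFc, hFν⟩ := htm.exists_lt_isClosed_of_ne_top hcne hhalf
    have hc2ne0 : ν t / 2 ≠ 0 := by
      simp [ENNReal.div_eq_zero_iff, hνt0, hcne]
    have hc2net : ν t / 2 ≠ ∞ := (ENNReal.div_lt_top hcne (by norm_num)).ne
    obtain ⟨n, hn⟩ := ENNReal.exists_nat_gt
      (r := (L + 1) / (ν t / 2)) (ENNReal.div_lt_top (by simp [hL]) hc2ne0).ne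
    set E : ℝ≥0∞ := ENNReal.ofReal (a - 1) * (n : ℝ≥0∞) ^ b + 1 with hEdef
    have hE0 : E ≠ 0 := by simp [hEdef]
    have hEt : E ≠ ∞ := by
      refine ENNReal.add_ne_top.2 ⟨ENNReal.mul_ne_top ENNReal.ofReal_ne_top
        (ENNReal.rpow_ne_top_of_nonneg (by linarith) (ENNReal.natCast_ne_top n)), one_ne_top⟩
    obtain ⟨U, htU, hUo, hμU⟩ := Set.exists_isOpen_lt_of_lt t E⁻¹
      (by rw [hμt]; exact ENNReal.inv_pos.2 hEt)
    obtain ⟨f, hf0, hf1, hf01⟩ := exists_continuous_zero_one_of_isClosed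
      (isClosed_compl_iff.2 hUo) hFc (disjoint_compl_left.mono_right (hFt.trans htU))
    set hM : BoundedContinuousFunction X ℝ := BoundedContinuousFunction.ofNormedAddCommGroup
      (fun x => (n : ℝ) * f x) (continuous_const.mul f.continuous) n (fun x => by
        rw [Real.norm_eq_abs, abs_of_nonneg (mul_nonneg (Nat.cast_nonneg n) (hf01 x).1)]
        exact mul_le_of_le_one_right (Nat.cast_nonneg n) (hf01 x).2) with hMdef
    have hMcoe : ∀ x, hM x = (n : ℝ) * f x := fun x => rfl
    have hM0 : ∀ x, 0 ≤ hM x := fun x => mul_nonneg (Nat.cast_nonneg n) (hf01 x).1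
    have hmain := Hbcf hM hM0
    have hlow : (n : ℝ≥0∞) * (ν t / 2) ≤ ∫⁻ x, ENNReal.ofReal (hM x) ∂ν := by
      calc (n : ℝ≥0∞) * (ν t / 2) ≤ (n : ℝ≥0∞) * ν F := mul_le_mul_right hFν.le _
        _ = ∫⁻ _ in F, (n : ℝ≥0∞) ∂ν := (setLIntegral_const F _).symm
        _ = ∫⁻ x in F, ENNReal.ofReal (hM x) ∂ν := by
            refine setLIntegral_congr_fun hFc.measurableSet (fun x hx => ?_)
            rw [hMcoe, hf1 hx, Pi.one_apply, mul_one, ENNReal.ofReal_natCast]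
        _ ≤ ∫⁻ x, ENNReal.ofReal (hM x) ∂ν := setLIntegral_le_lintegral F _
    have hup : ∫⁻ x, ENNReal.ofReal (hM x) ^ b ∂μ ≤ (n : ℝ≥0∞) ^ b * μ U := by
      calc ∫⁻ x, ENNReal.ofReal (hM x) ^ b ∂μ
          ≤ ∫⁻ x, U.indicator (fun _ => (n : ℝ≥0∞) ^ b) x ∂μ := by
            refine lintegral_mono fun x => ?_
            by_cases hxU : x ∈ U
            · rw [Set.indicator_of_mem hxU]
              refine ENNReal.rpow_le_rpow ?_ (by linarith)
              rw [hMcoe, ← ENNReal.ofReal_natCast]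
              exact ENNReal.ofReal_le_ofReal
                (mul_le_of_le_one_right (Nat.cast_nonneg n) (hf01 x).2)
            · rw [Set.indicator_of_notMem hxU, hMcoe, hf0 hxU, Pi.zero_apply, mul_zero]
              simp [ENNReal.zero_rpow_of_pos (by linarith : (0:ℝ) < b)]
        _ = (n : ℝ≥0∞) ^ b * μ U := by
            rw [lintegral_indicator hUo.measurableSet, setLIntegral_const]
    have hfinal : (n : ℝ≥0∞) * (ν t / 2) ≤ L + 1 := by
      have h2 : ENNReal.ofReal (a - 1) * ((n : ℝ≥0∞) ^ b * μ U) ≤ 1 := by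
        calc ENNReal.ofReal (a - 1) * ((n : ℝ≥0∞) ^ b * μ U)
            = (ENNReal.ofReal (a - 1) * (n : ℝ≥0∞) ^ b) * μ U := by ring
          _ ≤ E * E⁻¹ := mul_le_mul' (by rw [hEdef]; exact le_self_add) hμU.le
          _ ≤ 1 := le_of_eq (ENNReal.mul_inv_cancel hE0 hEt)
      calc (n : ℝ≥0∞) * (ν t / 2)
          ≤ ENNReal.ofReal a * ∫⁻ x, ENNReal.ofReal (hM x) ∂ν :=
            hlow.trans (le_mul_of_one_le_left zero_le (ENNReal.one_le_ofReal.2 ha1.le))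
        _ ≤ L + ENNReal.ofReal (a - 1) * ∫⁻ x, ENNReal.ofReal (hM x) ^ b ∂μ := hmain
        _ ≤ L + ENNReal.ofReal (a - 1) * ((n : ℝ≥0∞) ^ b * μ U) := by gcongr
        _ ≤ L + 1 := add_le_add_right h2 L
    have hcontra : L + 1 < (n : ℝ≥0∞) * (ν t / 2) :=
      (ENNReal.div_lt_iff (Or.inl hc2ne0) (Or.inl hc2net)).1 hn
    exact absurd hfinal (not_le.2 hcontra)
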